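/- If G is a po-group and u ∈ G with u > 0, then the interval Γ(G,u) = {g ∈ G : 0 ≤ g ≤ u}, with partial addition a + b defined iff a + b ∈ [0,u] (using the group addition), with constants 0 and u, is a pseudo effect algebra, and in it a⁻ = u − a and a∼ = −a + u. -/

import Mathlib

open scoped Classical

/-- A generalized pseudo effect algebra (GPEA): a partial algebra `(E; +, 0)`
satisfying (GP1)-(GP5). The partial addition is modelled by an `Option`-valued
operation: `add a b = some c` means `a + b` is defined and equals `c`. -/
structure GPEA (E : Type) where
  add : E → E → Option E
  zero : E
  assoc_ex : ∀ a b c : E,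
    (∃ ab, add a b = some ab ∧ (add ab c).isSome) ↔
    (∃ bc, add b c = some bc ∧ (add a bc).isSome)
  assoc_eq : ∀ a b c ab bc : E, add a b = some ab → add b c = some bc →
    add ab c = add a bc
  exch : ∀ a b ab : E, add a b = some ab →
    (∃ d, add d a = some ab) ∧ (∃ e, add b e = some ab)
  cancel_left : ∀ a b c x : E, add a b = some x → add a c = some x → b = c
  cancel_right : ∀ a b c x : E, add b a = some x → add c a = some x → b = c
  pos : ∀ a b : E, add a b = some zero → a = zero ∧ b = zero
  add_zero : ∀ a : E, add a zero = some a
  zero_add : ∀ a : E, add zero a = some a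

/-- The induced order of a GPEA: `a ≤ b` iff `∃ c, a + c = b`. -/
def GPEA.le {E : Type} (G : GPEA E) (a b : E) : Prop := ∃ c, G.add a c = some b

/-- `b ⊖ a` : the element `c` with `c + a = b` (if it exists, else `0`). -/
noncomputable def GPEA.lsub {E : Type} (G : GPEA E) (b a : E) : E :=
  if h : ∃ c, G.add c a = some b then h.choose else G.zero

/-- `a ⊘ b` : the element `c` with `a + c = b` (if it exists, else `0`). -/
noncomputable def GPEA.rsub {E : Type} (G : GPEA E) (a b : E) : E :=
  if h : ∃ c, G.add a c = some b then h.choose else G.zero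

/-- A GPEA is directed if any two elements have a common upper bound. -/
def GPEA.directed {E : Type} (G : GPEA E) : Prop :=
  ∀ a b : E, ∃ c, G.le a c ∧ G.le b c

/-- A pseudo effect algebra (PEA): a partial algebra `(E; +, 0, 1)`
satisfying axioms (i)-(iv). -/
structure PEA (E : Type) where
  add : E → E → Option E
  zero : E
  one : E
  assoc_ex : ∀ a b c : E,
    (∃ ab, add a b = some ab ∧ (add ab c).isSome) ↔
    (∃ bc, add b c = some bc ∧ (add a bc).isSome)
  assoc_eq : ∀ a b c ab bc : E, add a b = some ab → add b c = some bc →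
    add ab c = add a bc
  compl_right : ∀ a : E, ∃! d, add a d = some one
  compl_left : ∀ a : E, ∃! e, add e a = some one
  exch : ∀ a b ab : E, add a b = some ab →
    (∃ d, add d a = some ab) ∧ (∃ e, add b e = some ab)
  one_left : ∀ a : E, (add one a).isSome → a = zero
  one_right : ∀ a : E, (add a one).isSome → a = zero

/-- The induced order of a PEA. -/
def PEA.le {E : Type} (P : PEA E) (a b : E) : Prop := ∃ c, P.add a c = some b

/-- `a⁻` : the unique element with `a⁻ + a = 1`. -/
noncomputable def PEA.negL {E : Type} (P : PEA E) (a : E) : E :=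
  (P.compl_left a).choose

/-- `a∼` : the unique element with `a + a∼ = 1`. -/
noncomputable def PEA.negR {E : Type} (P : PEA E) (a : E) : E :=
  (P.compl_right a).choose

/-- `E` is `λ,ρ`-weakly commutative. -/
def GPEA.lrWC {E I : Type} (G : GPEA E) (l r : I ≃ I) : Prop :=
  (∀ f a : I → E, ∀ i : I,
    ((G.add (f (r.symm i)) (a i)).isSome ↔ (G.add (a i) (f (l.symm i))).isSome)) ∧
  (∀ g b : I → E, ∀ i : I,
    ((G.add (g (l.symm i)) (b i)).isSome ↔ (G.add (b i) (g (r.symm i))).isSome))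

/-- The partial addition of the kite `K_I^{λ,ρ}(E)`: the carrier is
`(I → E) ⊕ (I → E)`, `Sum.inl` being the lower copy `E^I` and `Sum.inr` the
upper copy `(Ē)^I`; rules (I)-(IV). -/
noncomputable def kiteAdd {E I : Type} (G : GPEA E) (l r : I ≃ I) :
    (I → E) ⊕ (I → E) → (I → E) ⊕ (I → E) → Option ((I → E) ⊕ (I → E))
  | Sum.inr _, Sum.inr _ => none
  | Sum.inr a, Sum.inl f =>
      if _ : ∀ i, G.le (f (r.symm i)) (a i) then
        some (Sum.inr fun i => G.rsub (f (r.symm i)) (a i))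
      else none
  | Sum.inl f, Sum.inr a =>
      if _ : ∀ i, G.le (f (l.symm i)) (a i) then
        some (Sum.inr fun i => G.lsub (a i) (f (l.symm i)))
      else none
  | Sum.inl f, Sum.inl g =>
      if h : ∀ j, (G.add (f j) (g j)).isSome then
        some (Sum.inl fun j => (G.add (f j) (g j)).get (h j))
      else none

/-- The bottom element `0 = ⟨0_j⟩` of the kite. -/
def kiteZero (E I : Type) (G : GPEA E) : (I → E) ⊕ (I → E) :=
  Sum.inl fun _ => G.zero

/-- The top element `1 = ⟨0̄_i⟩` of the kite. -/
def kiteOne (E I : Type) (G : GPEA E) : (I → E) ⊕ (I → E) :=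
  Sum.inr fun _ => G.zero

/-- Riesz decomposition property RDP for a GPEA. -/
def GPEA.RDP {E : Type} (G : GPEA E) : Prop :=
  ∀ a1 a2 b1 b2 x : E, G.add a1 a2 = some x → G.add b1 b2 = some x →
    ∃ c11 c12 c21 c22 : E, G.add c11 c12 = some a1 ∧ G.add c21 c22 = some a2 ∧
      G.add c11 c21 = some b1 ∧ G.add c12 c22 = some b2

/-- RDP₁ for a GPEA. -/
def GPEA.RDP1 {E : Type} (G : GPEA E) : Prop :=
  ∀ a1 a2 b1 b2 x : E, G.add a1 a2 = some x → G.add b1 b2 = some x →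
    ∃ c11 c12 c21 c22 : E, G.add c11 c12 = some a1 ∧ G.add c21 c22 = some a2 ∧
      G.add c11 c21 = some b1 ∧ G.add c12 c22 = some b2 ∧
      (∀ u v : E, G.le u c12 → G.le v c21 → G.add u v = G.add v u)

/-- RDP₂ for a GPEA (`c₁₂ ∧ c₂₁ = 0`). -/
def GPEA.RDP2 {E : Type} (G : GPEA E) : Prop :=
  ∀ a1 a2 b1 b2 x : E, G.add a1 a2 = some x → G.add b1 b2 = some x →
    ∃ c11 c12 c21 c22 : E, G.add c11 c12 = some a1 ∧ G.add c21 c22 = some a2 ∧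
      G.add c11 c21 = some b1 ∧ G.add c12 c22 = some b2 ∧
      (∀ z : E, G.le z c12 → G.le z c21 → z = G.zero)

/-- RDP₀ for a GPEA. -/
def GPEA.RDP0 {E : Type} (G : GPEA E) : Prop :=
  ∀ a b c x : E, G.add b c = some x → G.le a x →
    ∃ b1 c1 : E, G.le b1 b ∧ G.le c1 c ∧ G.add b1 c1 = some a

/-- RDP for a PEA. -/
def PEA.RDP {E : Type} (P : PEA E) : Prop :=
  ∀ a1 a2 b1 b2 x : E, P.add a1 a2 = some x → P.add b1 b2 = some x →
    ∃ c11 c12 c21 c22 : E, P.add c11 c12 = some a1 ∧ P.add c21 c22 = some a2 ∧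
      P.add c11 c21 = some b1 ∧ P.add c12 c22 = some b2

/-- RDP₁ for a PEA. -/
def PEA.RDP1 {E : Type} (P : PEA E) : Prop :=
  ∀ a1 a2 b1 b2 x : E, P.add a1 a2 = some x → P.add b1 b2 = some x →
    ∃ c11 c12 c21 c22 : E, P.add c11 c12 = some a1 ∧ P.add c21 c22 = some a2 ∧
      P.add c11 c21 = some b1 ∧ P.add c12 c22 = some b2 ∧
      (∀ u v : E, P.le u c12 → P.le v c21 → P.add u v = P.add v u)

/-- RDP₂ for a PEA. -/
def PEA.RDP2 {E : Type} (P : PEA E) : Prop :=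
  ∀ a1 a2 b1 b2 x : E, P.add a1 a2 = some x → P.add b1 b2 = some x →
    ∃ c11 c12 c21 c22 : E, P.add c11 c12 = some a1 ∧ P.add c21 c22 = some a2 ∧
      P.add c11 c21 = some b1 ∧ P.add c12 c22 = some b2 ∧
      (∀ z : E, P.le z c12 → P.le z c21 → z = P.zero)

/-- RDP₀ for a PEA. -/
def PEA.RDP0 {E : Type} (P : PEA E) : Prop :=
  ∀ a b c x : E, P.add b c = some x → P.le a x →
    ∃ b1 c1 : E, P.le b1 b ∧ P.le c1 c ∧ P.add b1 c1 = some a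

/-- Ideal of a GPEA. -/
def GPEA.isIdeal {E : Type} (G : GPEA E) (A : Set E) : Prop :=
  G.zero ∈ A ∧ (∀ x y z : E, x ∈ A → y ∈ A → G.add x y = some z → z ∈ A) ∧
  (∀ x y : E, G.le x y → y ∈ A → x ∈ A)

/-- Normal ideal of a GPEA: `x + A = A + x` for all `x`. -/
def GPEA.isNormalIdeal {E : Type} (G : GPEA E) (A : Set E) : Prop :=
  G.isIdeal A ∧
  ∀ x : E, {z | ∃ y ∈ A, G.add x y = some z} = {z | ∃ y ∈ A, G.add y x = some z}

/-- Ideal of a PEA. -/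
def PEA.isIdeal {E : Type} (P : PEA E) (A : Set E) : Prop :=
  P.zero ∈ A ∧ (∀ x y z : E, x ∈ A → y ∈ A → P.add x y = some z → z ∈ A) ∧
  (∀ x y : E, P.le x y → y ∈ A → x ∈ A)

/-- Normal ideal of a PEA. -/
def PEA.isNormalIdeal {E : Type} (P : PEA E) (A : Set E) : Prop :=
  P.isIdeal A ∧
  ∀ x : E, {z | ∃ y ∈ A, P.add x y = some z} = {z | ∃ y ∈ A, P.add y x = some z}

/-- Maximal ideal of a PEA: proper and not properly contained in any proper ideal. -/
def PEA.isMaximalIdeal {E : Type} (P : PEA E) (A : Set E) : Prop :=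
  P.isIdeal A ∧ A ≠ Set.univ ∧
  ∀ B : Set E, P.isIdeal B → A ⊆ B → B = A ∨ B = Set.univ

/-- `i` and `j` are connected: `(ρ∘λ⁻¹)^m(i) = j` or `(λ∘ρ⁻¹)^m(i) = j` for some `m ≥ 0`. -/
def connected {I : Type} (l r : I ≃ I) (i j : I) : Prop :=
  ∃ m : ℕ, (fun x => r (l.symm x))^[m] i = j ∨ (fun x => l (r.symm x))^[m] i = j

section IntervalAux
set_option linter.unusedSectionVars false

variable {G : Type} [AddGroup G] [PartialOrder G]
    [CovariantClass G G (· + ·) (· ≤ ·)]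
    [CovariantClass G G (Function.swap (· + ·)) (· ≤ ·)]
    (u : G)

/-- Auxiliary: the partial addition on the interval `[0,u]`. -/
noncomputable def iadd (a b : {g : G // 0 ≤ g ∧ g ≤ u}) : Option {g : G // 0 ≤ g ∧ g ≤ u} :=
  if h : 0 ≤ a.1 + b.1 ∧ a.1 + b.1 ≤ u then some ⟨a.1 + b.1, h⟩ else none

variable {u}

lemma neg_nonpos' {a : G} (h : 0 ≤ a) : -a ≤ 0 := by
  have := add_le_add_left h (-a); simpa using this

lemma iadd_nonneg (a b : {g : G // 0 ≤ g ∧ g ≤ u}) : 0 ≤ a.1 + b.1 :=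
  add_nonneg a.2.1 b.2.1

lemma iadd_some_iff {a b c : {g : G // 0 ≤ g ∧ g ≤ u}} :
    iadd u a b = some c ↔ a.1 + b.1 ≤ u ∧ c.1 = a.1 + b.1 := by
  unfold iadd
  by_cases h : 0 ≤ a.1 + b.1 ∧ a.1 + b.1 ≤ u
  · simp only [dif_pos h]
    constructor
    · rintro hc
      refine ⟨h.2, ?_⟩
      have := (Option.some_injective _ hc.symm)
      rw [this]
    · rintro ⟨_, hc⟩
      congr 1
      exact Subtype.ext hc.symm
  · simp only [dif_neg h]
    constructor
    · intro hc; cases hc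
    · rintro ⟨h1, _⟩; exact absurd ⟨iadd_nonneg a b, h1⟩ h

lemma iadd_mk (a b : {g : G // 0 ≤ g ∧ g ≤ u}) (h : a.1 + b.1 ≤ u) :
    iadd u a b = some ⟨a.1 + b.1, iadd_nonneg a b, h⟩ :=
  iadd_some_iff.mpr ⟨h, rfl⟩

lemma iadd_isSome_iff {a b : {g : G // 0 ≤ g ∧ g ≤ u}} :
    (iadd u a b).isSome ↔ a.1 + b.1 ≤ u := by
  constructor
  · intro h
    obtain ⟨c, hc⟩ := Option.isSome_iff_exists.mp h
    exact (iadd_some_iff.mp hc).1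
  · intro h
    rw [iadd_mk a b h]; rfl

lemma iadd_congr {a b c d : {g : G // 0 ≤ g ∧ g ≤ u}}
    (h : a.1 + b.1 = c.1 + d.1) : iadd u a b = iadd u c d := by
  unfold iadd
  simp only [h]

end IntervalAux

/-- For a po-group `G` and `u > 0`, the interval `Γ(G,u) = [0,u]`
with addition defined iff the (group) sum lies in `[0,u]` is a pseudo effect
algebra, in which `a⁻ = u - a` and `a∼ = -a + u`. -/
theorem interval_pea {G : Type} [AddGroup G] [PartialOrder G]
    [CovariantClass G G (· + ·) (· ≤ ·)]
    [CovariantClass G G (Function.swap (· + ·)) (· ≤ ·)]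
    (u : G) (hu : 0 < u) :
    ∃ P : PEA {g : G // 0 ≤ g ∧ g ≤ u},
      (∀ a b : {g : G // 0 ≤ g ∧ g ≤ u},
        P.add a b = if h : 0 ≤ a.1 + b.1 ∧ a.1 + b.1 ≤ u then some ⟨a.1 + b.1, h⟩
          else none) ∧
      P.zero = ⟨0, le_refl 0, le_of_lt hu⟩ ∧
      P.one = ⟨u, le_of_lt hu, le_refl u⟩ ∧
      (∀ a : {g : G // 0 ≤ g ∧ g ≤ u},
        (P.negL a).1 = u - a.1 ∧ (P.negR a).1 = -a.1 + u) := by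
  set E := {g : G // 0 ≤ g ∧ g ≤ u} with hE
  have zmem : (0 : G) ∈ {g : G | 0 ≤ g ∧ g ≤ u} := ⟨le_refl 0, le_of_lt hu⟩
  have umem : u ∈ {g : G | 0 ≤ g ∧ g ≤ u} := ⟨le_of_lt hu, le_refl u⟩
  -- complement lemmas
  have compl_right : ∀ a : E, ∃! d : E, iadd u a d = some ⟨u, umem⟩ := by
    intro a
    have hd : -a.1 + u ∈ {g : G | 0 ≤ g ∧ g ≤ u} := by
      constructor
      · have := add_le_add_left a.2.2 (-a.1)
        simpa using this
      · have : -a.1 + u ≤ 0 + u := add_le_add_left (neg_nonpos' a.2.1) u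
        simpa using this
    refine ⟨⟨-a.1 + u, hd⟩, ?_, ?_⟩
    · exact iadd_some_iff.mpr ⟨by simp, by simp⟩
    · intro y hy
      obtain ⟨_, hy2⟩ := iadd_some_iff.mp hy
      apply Subtype.ext
      have : y.1 = -a.1 + (a.1 + y.1) := by rw [neg_add_cancel_left]
      rw [this, ← hy2]
  have compl_left : ∀ a : E, ∃! e : E, iadd u e a = some ⟨u, umem⟩ := by
    intro a
    have he : u - a.1 ∈ {g : G | 0 ≤ g ∧ g ≤ u} := by
      constructor
      · have := add_le_add_right a.2.2 (-a.1)
        simpa [sub_eq_add_neg] using this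
      · have : u + -a.1 ≤ u + 0 := add_le_add_right (neg_nonpos' a.2.1) u
        simpa [sub_eq_add_neg] using this
    refine ⟨⟨u - a.1, he⟩, ?_, ?_⟩
    · exact iadd_some_iff.mpr ⟨by simp, by simp⟩
    · intro y hy
      obtain ⟨_, hy2⟩ := iadd_some_iff.mp hy
      apply Subtype.ext
      have : y.1 = y.1 + a.1 - a.1 := by rw [add_sub_cancel_right]
      rw [this, ← hy2]
  refine ⟨{
    add := iadd u
    zero := ⟨0, zmem⟩
    one := ⟨u, umem⟩
    assoc_ex := ?_
    assoc_eq := ?_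
    compl_right := compl_right
    compl_left := compl_left
    exch := ?_
    one_left := ?_
    one_right := ?_ }, fun a b => rfl, rfl, rfl, ?_⟩
  · -- assoc_ex
    intro a b c
    constructor
    · rintro ⟨ab, hab, hs⟩
      obtain ⟨h1, h2⟩ := iadd_some_iff.mp hab
      rw [iadd_isSome_iff, h2] at hs
      have hbc : b.1 + c.1 ≤ u := by
        calc b.1 + c.1 = 0 + (b.1 + c.1) := by rw [zero_add]
        _ ≤ a.1 + (b.1 + c.1) := add_le_add_left a.2.1 _
        _ = a.1 + b.1 + c.1 := (add_assoc _ _ _).symm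
        _ ≤ u := hs
      refine ⟨⟨b.1 + c.1, iadd_nonneg b c, hbc⟩, iadd_mk b c hbc, ?_⟩
      rw [iadd_isSome_iff]
      simpa [← add_assoc] using hs
    · rintro ⟨bc, hbc, hs⟩
      obtain ⟨h1, h2⟩ := iadd_some_iff.mp hbc
      rw [iadd_isSome_iff, h2, ← add_assoc] at hs
      have hab : a.1 + b.1 ≤ u := by
        calc a.1 + b.1 = a.1 + b.1 + 0 := by rw [add_zero]
        _ ≤ a.1 + b.1 + c.1 := add_le_add_right c.2.1 _
        _ ≤ u := hs
      refine ⟨⟨a.1 + b.1, iadd_nonneg a b, hab⟩, iadd_mk a b hab, ?_⟩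
      rw [iadd_isSome_iff]
      exact hs
  · -- assoc_eq
    intro a b c ab bc hab hbc
    obtain ⟨_, h2⟩ := iadd_some_iff.mp hab
    obtain ⟨_, h4⟩ := iadd_some_iff.mp hbc
    exact iadd_congr (by rw [h2, h4, add_assoc])
  · -- exch
    intro a b ab hab
    obtain ⟨h1, h2⟩ := iadd_some_iff.mp hab
    constructor
    · have hd : ab.1 - a.1 ∈ {g : G | 0 ≤ g ∧ g ≤ u} := by
        constructor
        · have ha : a.1 ≤ ab.1 := by
            rw [h2]
            calc a.1 = a.1 + 0 := by rw [add_zero]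
            _ ≤ a.1 + b.1 := add_le_add_right b.2.1 _
          have := add_le_add_right ha (-a.1)
          simpa [sub_eq_add_neg] using this
        · calc ab.1 - a.1 = ab.1 + -a.1 := sub_eq_add_neg _ _
          _ ≤ u + -a.1 := add_le_add_left ab.2.2 _
          _ ≤ u + 0 := add_le_add_right (neg_nonpos' a.2.1) u
          _ = u := add_zero u
      refine ⟨⟨ab.1 - a.1, hd⟩, iadd_some_iff.mpr ⟨?_, ?_⟩⟩
      · simpa using ab.2.2
      · simp
    · have he : -b.1 + ab.1 ∈ {g : G | 0 ≤ g ∧ g ≤ u} := by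
        constructor
        · have hb : b.1 ≤ ab.1 := by
            rw [h2]
            calc b.1 = 0 + b.1 := by rw [zero_add]
            _ ≤ a.1 + b.1 := add_le_add_left a.2.1 _
          have := add_le_add_left hb (-b.1)
          simpa using this
        · calc -b.1 + ab.1 ≤ -b.1 + u := add_le_add_right ab.2.2 _
          _ ≤ 0 + u := add_le_add_left (neg_nonpos' b.2.1) u
          _ = u := zero_add u
      refine ⟨⟨-b.1 + ab.1, he⟩, iadd_some_iff.mpr ⟨?_, ?_⟩⟩
      · simpa using ab.2.2
      · simp
  · -- one_left
    intro a h
    rw [iadd_isSome_iff] at h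
    apply Subtype.ext
    have h1 : a.1 ≤ 0 := by
      have : u + a.1 ≤ u + 0 := by simpa using h
      exact le_of_add_le_add_left this
    exact le_antisymm h1 a.2.1
  · -- one_right
    intro a h
    rw [iadd_isSome_iff] at h
    apply Subtype.ext
    have h1 : a.1 ≤ 0 := by
      have : a.1 + u ≤ 0 + u := by simpa using h
      exact le_of_add_le_add_right this
    exact le_antisymm h1 a.2.1
  · -- negL / negR
    intro a
    constructor
    · have h := (compl_left a).choose_spec.1
      obtain ⟨_, h2⟩ := iadd_some_iff.mp h
      show ((compl_left a).choose).1 = u - a.1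
      rw [eq_sub_iff_add_eq, ← h2]
    · have h := (compl_right a).choose_spec.1
      obtain ⟨_, h2⟩ := iadd_some_iff.mp h
      show ((compl_right a).choose).1 = -a.1 + u
      exact eq_neg_add_of_add_eq h2.symm
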